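/- A doubly stochastic matrix X ∈ ℝ^{V×V} is strongly connected (i.e., the directed graph D_X with edges (v,v') whenever X_{vv'} ≠ 0 is strongly connected) if and only if the underlying undirected graph G_X is connected. -/

import Mathlib

open Finset Matrix

/-- A doubly stochastic matrix: nonnegative with all row sums and column sums equal to 1. -/
def DoublyStochastic {V : Type*} [Fintype V] (X : Matrix V V ℝ) : Prop :=
  (∀ i j, 0 ≤ X i j) ∧ (∀ i, ∑ j, X i j = 1) ∧ (∀ j, ∑ i, X i j = 1)

/-- Key lemma: in a doubly stochastic matrix, every directed edge can be traversed
backwards via a directed path. -/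
lemma doublyStochastic_back {V : Type*} [Fintype V] (X : Matrix V V ℝ)
    (hX : DoublyStochastic X) {a b : V} (h : X a b ≠ 0) :
    Relation.ReflTransGen (fun x y => X x y ≠ 0) b a := by
  classical
  by_contra hna
  set R := fun x y => X x y ≠ 0 with hR
  set S : Finset V := Finset.univ.filter (fun v => Relation.ReflTransGen R b v) with hS
  have hbS : b ∈ S := by simp only [hS, Finset.mem_filter, Finset.mem_univ, true_and]; exact .refl
  have haS : a ∉ S := by simpa [hS] using hna
  have hclosed : ∀ s ∈ S, ∀ t, X s t ≠ 0 → t ∈ S := by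
    intro s hs t ht
    simp only [hS, Finset.mem_filter, Finset.mem_univ, true_and] at hs ⊢
    exact hs.tail ht
  have h1 : ∑ s ∈ S, ∑ t, X s t = S.card := by
    rw [Finset.sum_congr rfl (fun s _ => hX.2.1 s)]; simp
  have h2 : ∑ s ∈ S, ∑ t, X s t = ∑ s ∈ S, ∑ t ∈ S, X s t := by
    refine Finset.sum_congr rfl fun s hs => ?_
    rw [← Finset.sum_subset (Finset.subset_univ S)]
    intro t _ htS
    by_contra h0
    exact htS (hclosed s hs t h0)
  have h3 : ∑ t ∈ S, ∑ s, X s t = S.card := by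
    rw [Finset.sum_congr rfl (fun t _ => hX.2.2 t)]; simp
  have h4 : ∑ t ∈ S, ∑ s, X s t
      = ∑ t ∈ S, ∑ s ∈ S, X s t + ∑ t ∈ S, ∑ s ∈ Sᶜ, X s t := by
    rw [← Finset.sum_add_distrib]
    refine Finset.sum_congr rfl fun t _ => ?_
    rw [Finset.sum_add_sum_compl]
  have hzero : ∑ t ∈ S, ∑ s ∈ Sᶜ, X s t = 0 := by
    have := h3
    rw [h4] at this
    have hc : ∑ t ∈ S, ∑ s ∈ S, X s t = S.card := by
      rw [Finset.sum_comm, ← h2, h1]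
    linarith
  have hab : X a b = 0 := by
    have h5 : ∑ s ∈ Sᶜ, X s b = 0 := by
      have := (Finset.sum_eq_zero_iff_of_nonneg
        (fun t _ => Finset.sum_nonneg fun s _ => hX.1 s t)).1 hzero b hbS
      exact this
    exact (Finset.sum_eq_zero_iff_of_nonneg (fun s _ => hX.1 s b)).1 h5 a
      (Finset.mem_compl.2 haS)
  exact h hab

/-- A doubly stochastic matrix `X` is strongly connected (the digraph `D_X`
with an edge `(v,v')` whenever `X v v' ≠ 0` is strongly connected) if and only if the
underlying undirected graph `G_X` is connected. -/
theorem doublyStochastic_stronglyConnected_iff_connected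
    {V : Type*} [Fintype V] (X : Matrix V V ℝ) (hX : DoublyStochastic X) :
    (∀ u v : V, Relation.ReflTransGen (fun a b => X a b ≠ 0) u v) ↔
    (∀ u v : V, Relation.ReflTransGen (fun a b => X a b ≠ 0 ∨ X b a ≠ 0) u v) := by
  constructor
  · intro h u v
    exact Relation.ReflTransGen.mono (fun a b hab => Or.inl hab) u v (h u v)
  · intro h u v
    refine Relation.ReflTransGen.trans_induction_on (h u v) (fun _ => .refl) ?_
      (fun _ _ => Relation.ReflTransGen.trans)
    intro a b hab
    rcases hab with hab | hba
    · exact Relation.ReflTransGen.single hab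
    · exact doublyStochastic_back X hX hba
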